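/- For every probability measure μ on X and all continuous functions g, g' : X → ℝ, the soft C-transform is a uniform contraction for the variation norm: ‖T_μ g − T_μ g'‖_var ≤ κ · ‖g − g'‖_var, where κ = 1 − exp(−L · diam(X)) < 1. In particular the contraction factor κ does not depend on μ. -/

import Mathlib

open MeasureTheory Filter

section Helpers

variable {X : Type*} [MetricSpace X] [CompactSpace X] [Nonempty X]
    [MeasurableSpace X] [BorelSpace X]

lemma cont_integrable (μ : Measure X) [IsFiniteMeasure μ] {f : X → ℝ} (hf : Continuous f) :
    Integrable f μ := by
  obtain ⟨B', hB'⟩ := isCompact_univ.exists_bound_of_continuousOn hf.continuousOn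
  exact (integrable_const B').mono' hf.aestronglyMeasurable
    (Filter.Eventually.of_forall fun y => hB' y (Set.mem_univ y))

lemma integral_pos_of_cont (μ : Measure X) [IsProbabilityMeasure μ] {f : X → ℝ}
    (hf : Continuous f) (hfpos : ∀ y, 0 < f y) : 0 < ∫ y, f y ∂μ := by
  obtain ⟨y₀, -, hy₀⟩ := isCompact_univ.exists_isMinOn Set.univ_nonempty hf.continuousOn
  have : (f y₀ : ℝ) = ∫ _ , f y₀ ∂μ := by simp
  calc (0:ℝ) < f y₀ := hfpos y₀
    _ = ∫ _ , f y₀ ∂μ := this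
    _ ≤ ∫ y, f y ∂μ := integral_mono (integrable_const _) (cont_integrable μ hf)
        (fun y => hy₀ (Set.mem_univ y))

lemma avg_compare {α : Type*} [MeasurableSpace α] (μ : Measure α) (c s : ℝ)
    (hc : 0 < c) (hs : 0 ≤ s) (v K₁ K₂ : α → ℝ)
    (hv0 : ∀ y, 0 ≤ v y) (hvs : ∀ y, v y ≤ s)
    (hK₁0 : ∀ y, 0 ≤ K₁ y) (hK₂0 : ∀ y, 0 ≤ K₂ y)
    (h12 : ∀ y, c * K₂ y ≤ K₁ y) (h21 : ∀ y, c * K₁ y ≤ K₂ y)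
    (hK₁ : Integrable K₁ μ) (hK₂ : Integrable K₂ μ)
    (hvK₁ : Integrable (fun y => v y * K₁ y) μ)
    (hvK₂ : Integrable (fun y => v y * K₂ y) μ)
    (hZ₁ : 0 < ∫ y, K₁ y ∂μ) (hZ₂ : 0 < ∫ y, K₂ y ∂μ) :
    (∫ y, v y * K₁ y ∂μ) / (∫ y, K₁ y ∂μ) - (∫ y, v y * K₂ y ∂μ) / (∫ y, K₂ y ∂μ)
      ≤ (1 - c) * s := by
  set Z₁ := ∫ y, K₁ y ∂μ
  set Z₂ := ∫ y, K₂ y ∂μ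
  set E₁ := ∫ y, v y * K₁ y ∂μ
  set E₂ := ∫ y, v y * K₂ y ∂μ
  have hE₁0 : 0 ≤ E₁ := integral_nonneg fun y => mul_nonneg (hv0 y) (hK₁0 y)
  have hE₂0 : 0 ≤ E₂ := integral_nonneg fun y => mul_nonneg (hv0 y) (hK₂0 y)
  have hE₁s : E₁ ≤ s * Z₁ := by
    rw [← integral_const_mul]
    exact integral_mono hvK₁ (hK₁.const_mul s)
      (fun y => mul_le_mul_of_nonneg_right (hvs y) (hK₁0 y))
  have hcz12 : c * Z₂ ≤ Z₁ := by
    rw [← integral_const_mul]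
    exact integral_mono (hK₂.const_mul c) hK₁ h12
  have hcz21 : c * Z₁ ≤ Z₂ := by
    rw [← integral_const_mul]
    exact integral_mono (hK₁.const_mul c) hK₂ h21
  rw [div_sub_div _ _ hZ₁.ne' hZ₂.ne', div_le_iff₀ (mul_pos hZ₁ hZ₂)]
  rcases le_total Z₁ Z₂ with hz | hz
  · have key : E₁ ≤ s * (Z₁ - c * Z₂) + c * E₂ := by
      have h1 : E₁ - c * E₂ ≤ s * (Z₁ - c * Z₂) := by
        have : (∫ y, (v y * K₁ y - c * (v y * K₂ y)) ∂μ)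
            ≤ ∫ y, (s * (K₁ y - c * K₂ y)) ∂μ := by
          refine integral_mono (hvK₁.sub (hvK₂.const_mul c))
            ((hK₁.sub (hK₂.const_mul c)).const_mul s) fun y => ?_
          have h0 : 0 ≤ K₁ y - c * K₂ y := by linarith [h12 y]
          calc v y * K₁ y - c * (v y * K₂ y) = v y * (K₁ y - c * K₂ y) := by ring
            _ ≤ s * (K₁ y - c * K₂ y) := mul_le_mul_of_nonneg_right (hvs y) h0
        rwa [integral_sub hvK₁ (hvK₂.const_mul c), integral_const_mul, integral_const_mul,
          integral_sub hK₁ (hK₂.const_mul c), integral_const_mul] at this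
      linarith
    nlinarith [mul_le_mul_of_nonneg_right key (le_of_lt hZ₂), mul_nonneg hE₂0 (sub_nonneg.2 hz),
      mul_nonneg (mul_nonneg hc.le hs) (mul_nonneg (sub_nonneg.2 hz) hZ₂.le)]
  · have key : c * E₁ ≤ E₂ := by
      rw [← integral_const_mul]
      refine integral_mono (hvK₁.const_mul c) hvK₂ fun y => ?_
      calc c * (v y * K₁ y) = v y * (c * K₁ y) := by ring
        _ ≤ v y * K₂ y := mul_le_mul_of_nonneg_left (h21 y) (hv0 y)
    nlinarith [mul_le_mul_of_nonneg_right hE₁s (sub_nonneg.2 hcz21),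
      mul_le_mul_of_nonneg_right key (le_of_lt hZ₁),
      mul_nonneg (mul_nonneg hs hZ₁.le) (mul_nonneg hc.le (sub_nonneg.2 hz))]

lemma hasDerivAt_J (μ : Measure X) [IsProbabilityMeasure μ]
    (u k : X → ℝ) (hu : Continuous u) (hk : Continuous k) (t₀ : ℝ) :
    HasDerivAt (fun t => ∫ y, Real.exp (t * u y) * k y ∂μ)
      (∫ y, u y * Real.exp (t₀ * u y) * k y ∂μ) t₀ := by
  obtain ⟨B, hB⟩ := isCompact_univ.exists_bound_of_continuousOn hu.continuousOn
  obtain ⟨Kb, hKb⟩ := isCompact_univ.exists_bound_of_continuousOn hk.continuousOn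
  have hB0 : 0 ≤ B := le_trans (norm_nonneg _) (hB (Classical.arbitrary X) trivial)
  have key := hasDerivAt_integral_of_dominated_loc_of_deriv_le (s := Metric.ball t₀ 1) (μ := μ)
    (F := fun t y => Real.exp (t * u y) * k y)
    (F' := fun t y => u y * Real.exp (t * u y) * k y)
    (bound := fun _ => B * Real.exp ((|t₀| + 1) * B) * Kb)
    (x₀ := t₀) (Metric.ball_mem_nhds t₀ one_pos)
    (Filter.Eventually.of_forall fun t =>
      (((continuous_const.mul hu).rexp.mul hk)).aestronglyMeasurable)
    (cont_integrable μ ((continuous_const.mul hu).rexp.mul hk))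
    ((hu.mul (continuous_const.mul hu).rexp |>.mul hk).aestronglyMeasurable)
    (Filter.Eventually.of_forall fun y t ht => ?_)
    (integrable_const _)
    (Filter.Eventually.of_forall fun y t _ => ?_)
  · exact key.2
  · have hy := hB y trivial
    have hky := hKb y trivial
    have ht' : |t| ≤ |t₀| + 1 := by
      rw [Metric.mem_ball, Real.dist_eq] at ht
      have := abs_sub_abs_le_abs_sub t t₀
      linarith
    have hexp : Real.exp (t * u y) ≤ Real.exp ((|t₀| + 1) * B) := by
      apply Real.exp_le_exp.2
      calc t * u y ≤ |t * u y| := le_abs_self _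
        _ = |t| * |u y| := abs_mul _ _
        _ ≤ (|t₀| + 1) * B := by
            apply mul_le_mul ht' (by simpa using hy) (abs_nonneg _) (by positivity)
    calc ‖u y * Real.exp (t * u y) * k y‖
        = |u y| * Real.exp (t * u y) * |k y| := by
          rw [Real.norm_eq_abs, abs_mul, abs_mul, abs_of_pos (Real.exp_pos _)]
      _ ≤ B * Real.exp ((|t₀| + 1) * B) * Kb := by
          apply mul_le_mul _ (by simpa using hky) (abs_nonneg _) (by positivity)
          exact mul_le_mul (by simpa using hy) hexp (Real.exp_pos _).le hB0
  · simpa [mul_comm] using (((hasDerivAt_id t).mul_const (u y)).exp.mul_const (k y))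

end Helpers

/-- Soft C-transform: `(T_μ h)(x) = − log ∫ exp(h(y) − C(x, y)) dμ(y)`. -/
noncomputable def softT {X : Type*} [MeasurableSpace X]
    (C : X × X → ℝ) (μ : Measure X) (h : X → ℝ) : X → ℝ :=
  fun x => - Real.log (∫ y, Real.exp (h y - C (x, y)) ∂μ)

/-- Variation norm: `‖f‖_var = sup f − inf f`. -/
noncomputable def varNorm {X : Type*} (f : X → ℝ) : ℝ :=
  (⨆ x, f x) - ⨅ x, f x

/-- The soft C-transform is a uniform contraction for the variation norm, with
contraction factor `κ = 1 − exp(−L·diam X) < 1`, independent of `μ`. -/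
theorem softT_contraction
    {X : Type*} [MetricSpace X] [CompactSpace X] [Nonempty X]
    [MeasurableSpace X] [BorelSpace X]
    (L : ℝ) (hL : 0 < L) (C : X × X → ℝ) (hC : LipschitzWith L.toNNReal C)
    (μ : Measure X) [IsProbabilityMeasure μ]
    (g g' : X → ℝ) (hg : Continuous g) (hg' : Continuous g') :
    varNorm (fun x => softT C μ g x - softT C μ g' x) ≤
      (1 - Real.exp (-(L * Metric.diam (Set.univ : Set X)))) *
        varNorm (fun x => g x - g' x) ∧
    (1 - Real.exp (-(L * Metric.diam (Set.univ : Set X)))) < 1 := by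
  have hCcont : Continuous C := hC.continuous
  set D : ℝ := L * Metric.diam (Set.univ : Set X) with hD
  set c : ℝ := Real.exp (-D) with hcdef
  have hc0 : 0 < c := Real.exp_pos _
  refine ⟨?_, by simpa using hc0⟩
  set u : X → ℝ := fun y => g y - g' y with hu_def
  have hu : Continuous u := hg.sub hg'
  have hbdd_above : BddAbove (Set.range u) := (isCompact_range hu).bddAbove
  have hbdd_below : BddBelow (Set.range u) := (isCompact_range hu).bddBelow
  set m : ℝ := ⨅ y, u y with hm
  set s : ℝ := varNorm u with hs_def
  have hu_lo : ∀ y, m ≤ u y := fun y => ciInf_le hbdd_below y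
  have huM : ∀ y, u y ≤ m + s := by
    intro y
    have h1 : u y ≤ ⨆ y, u y := le_ciSup hbdd_above y
    have : s = (⨆ y, u y) - m := rfl
    linarith
  have hs0 : 0 ≤ s := by
    have := hu_lo (Classical.arbitrary X)
    have h1 := huM (Classical.arbitrary X)
    linarith
  -- key pointwise claim
  have claim : ∀ x x' : X,
      (softT C μ g x - softT C μ g' x) - (softT C μ g x' - softT C μ g' x')
        ≤ (1 - c) * s := by
    intro x x'
    set k₁ : X → ℝ := fun y => Real.exp (g' y - C (x', y)) with hk₁def
    set k₂ : X → ℝ := fun y => Real.exp (g' y - C (x, y)) with hk₂def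
    have hk₁c : Continuous k₁ := (hg'.sub (hCcont.comp (Continuous.prodMk_right x'))).rexp
    have hk₂c : Continuous k₂ := (hg'.sub (hCcont.comp (Continuous.prodMk_right x))).rexp
    set J₁ : ℝ → ℝ := fun t => ∫ y, Real.exp (t * u y) * k₁ y ∂μ with hJ₁def
    set J₂ : ℝ → ℝ := fun t => ∫ y, Real.exp (t * u y) * k₂ y ∂μ with hJ₂def
    have hJ₁pos : ∀ t, 0 < J₁ t := fun t => integral_pos_of_cont μ
      ((continuous_const.mul hu).rexp.mul hk₁c)
      (fun y => mul_pos (Real.exp_pos _) (Real.exp_pos _))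
    have hJ₂pos : ∀ t, 0 < J₂ t := fun t => integral_pos_of_cont μ
      ((continuous_const.mul hu).rexp.mul hk₂c)
      (fun y => mul_pos (Real.exp_pos _) (Real.exp_pos _))
    set φ : ℝ → ℝ := fun t => Real.log (J₁ t) - Real.log (J₂ t) with hφdef
    set φ' : ℝ → ℝ := fun t =>
      (∫ y, u y * Real.exp (t * u y) * k₁ y ∂μ) / J₁ t
        - (∫ y, u y * Real.exp (t * u y) * k₂ y ∂μ) / J₂ t with hφ'def
    have hφderiv : ∀ t, HasDerivAt φ (φ' t) t := by
      intro t
      exact ((hasDerivAt_J μ u k₁ hu hk₁c t).log (hJ₁pos t).ne').sub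
        ((hasDerivAt_J μ u k₂ hu hk₂c t).log (hJ₂pos t).ne')
    -- MVT
    obtain ⟨t₀, ht₀, hslope⟩ := exists_hasDerivAt_eq_slope φ φ' one_pos
      (fun t _ => (hφderiv t).continuousAt.continuousWithinAt)
      (fun t _ => hφderiv t)
    -- bound φ' t₀ by avg_compare
    have hratio12 : ∀ y, c * k₂ y ≤ k₁ y := by
      intro y
      rw [hcdef, hk₁def, hk₂def, ← Real.exp_add, Real.exp_le_exp]
      have hd : dist (C (x', y)) (C (x, y)) ≤ L * dist x' x := by
        have := hC.dist_le_mul (x', y) (x, y)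
        simpa [Prod.dist_eq, Real.coe_toNNReal L hL.le, sup_eq_left.mpr dist_nonneg] using this
      have hdd : dist x' x ≤ Metric.diam (Set.univ : Set X) :=
        Metric.dist_le_diam_of_mem isCompact_univ.isBounded trivial trivial
      have habs : |C (x', y) - C (x, y)| ≤ D := by
        rw [Real.dist_eq] at hd
        calc |C (x', y) - C (x, y)| ≤ L * dist x' x := hd
          _ ≤ D := by rw [hD]; exact mul_le_mul_of_nonneg_left hdd hL.le
      have := abs_le.1 habs
      linarith
    have hratio21 : ∀ y, c * k₁ y ≤ k₂ y := by
      intro y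
      rw [hcdef, hk₁def, hk₂def, ← Real.exp_add, Real.exp_le_exp]
      have hd : dist (C (x', y)) (C (x, y)) ≤ L * dist x' x := by
        have := hC.dist_le_mul (x', y) (x, y)
        simpa [Prod.dist_eq, Real.coe_toNNReal L hL.le, sup_eq_left.mpr dist_nonneg] using this
      have hdd : dist x' x ≤ Metric.diam (Set.univ : Set X) :=
        Metric.dist_le_diam_of_mem isCompact_univ.isBounded trivial trivial
      have habs : |C (x', y) - C (x, y)| ≤ D := by
        rw [Real.dist_eq] at hd
        calc |C (x', y) - C (x, y)| ≤ L * dist x' x := hd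
          _ ≤ D := by rw [hD]; exact mul_le_mul_of_nonneg_left hdd hL.le
      have := abs_le.1 habs
      linarith
    have hbound : φ' t₀ ≤ (1 - c) * s := by
      set K₁ : X → ℝ := fun y => Real.exp (t₀ * u y) * k₁ y with hK₁def
      set K₂ : X → ℝ := fun y => Real.exp (t₀ * u y) * k₂ y with hK₂def
      have hK₁c : Continuous K₁ := (continuous_const.mul hu).rexp.mul hk₁c
      have hK₂c : Continuous K₂ := (continuous_const.mul hu).rexp.mul hk₂c
      set v : X → ℝ := fun y => u y - m with hvdef
      have hvc : Continuous v := hu.sub continuous_const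
      have havg := avg_compare μ c s hc0 hs0 v K₁ K₂
        (fun y => sub_nonneg.2 (hu_lo y))
        (fun y => sub_le_iff_le_add'.2 (huM y))
        (fun y => (mul_pos (Real.exp_pos _) (Real.exp_pos _)).le)
        (fun y => (mul_pos (Real.exp_pos _) (Real.exp_pos _)).le)
        (fun y => by
          have := hratio12 y
          have h0 : 0 < Real.exp (t₀ * u y) := Real.exp_pos _
          calc c * K₂ y = Real.exp (t₀ * u y) * (c * k₂ y) := by rw [hK₂def]; ring
            _ ≤ Real.exp (t₀ * u y) * k₁ y := mul_le_mul_of_nonneg_left this h0.le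
            _ = K₁ y := rfl)
        (fun y => by
          have := hratio21 y
          have h0 : 0 < Real.exp (t₀ * u y) := Real.exp_pos _
          calc c * K₁ y = Real.exp (t₀ * u y) * (c * k₁ y) := by rw [hK₁def]; ring
            _ ≤ Real.exp (t₀ * u y) * k₂ y := mul_le_mul_of_nonneg_left this h0.le
            _ = K₂ y := rfl)
        (cont_integrable μ hK₁c) (cont_integrable μ hK₂c)
        (cont_integrable μ (hvc.mul hK₁c)) (cont_integrable μ (hvc.mul hK₂c))
        (hJ₁pos t₀) (hJ₂pos t₀)
      -- relate ∫ v K_i to ∫ u y * exp(t₀ u y) * k_i y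
      have hrw₁ : ∫ y, v y * K₁ y ∂μ
          = (∫ y, u y * Real.exp (t₀ * u y) * k₁ y ∂μ) - m * J₁ t₀ := by
        rw [hJ₁def, ← integral_const_mul, ← integral_sub
          (cont_integrable (f := fun y => u y * Real.exp (t₀ * u y) * k₁ y) μ ((hu.mul (continuous_const.mul hu).rexp).mul hk₁c))
          (cont_integrable (f := fun y => m * (Real.exp (t₀ * u y) * k₁ y)) μ (continuous_const.mul ((continuous_const.mul hu).rexp.mul hk₁c)))]
        · exact integral_congr_ae (Filter.Eventually.of_forall fun y => by
            simp [hvdef, hK₁def]; ring)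
      have hrw₂ : ∫ y, v y * K₂ y ∂μ
          = (∫ y, u y * Real.exp (t₀ * u y) * k₂ y ∂μ) - m * J₂ t₀ := by
        rw [hJ₂def, ← integral_const_mul, ← integral_sub
          (cont_integrable (f := fun y => u y * Real.exp (t₀ * u y) * k₂ y) μ ((hu.mul (continuous_const.mul hu).rexp).mul hk₂c))
          (cont_integrable (f := fun y => m * (Real.exp (t₀ * u y) * k₂ y)) μ (continuous_const.mul ((continuous_const.mul hu).rexp.mul hk₂c)))]
        · exact integral_congr_ae (Filter.Eventually.of_forall fun y => by
            simp [hvdef, hK₂def]; ring)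
      rw [hrw₁, hrw₂] at havg
      have h1 : ((∫ y, u y * Real.exp (t₀ * u y) * k₁ y ∂μ) - m * J₁ t₀) / J₁ t₀
          = (∫ y, u y * Real.exp (t₀ * u y) * k₁ y ∂μ) / J₁ t₀ - m := by
        rw [sub_div, mul_div_assoc, div_self (hJ₁pos t₀).ne', mul_one]
      have h2 : ((∫ y, u y * Real.exp (t₀ * u y) * k₂ y ∂μ) - m * J₂ t₀) / J₂ t₀
          = (∫ y, u y * Real.exp (t₀ * u y) * k₂ y ∂μ) / J₂ t₀ - m := by
        rw [sub_div, mul_div_assoc, div_self (hJ₂pos t₀).ne', mul_one]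
      rw [h1, h2] at havg
      rw [hφ'def]
      dsimp only
      linarith [havg]
    -- relate φ 1 - φ 0 to softT difference
    have hφ10 : (softT C μ g x - softT C μ g' x) - (softT C μ g x' - softT C μ g' x')
        = φ 1 - φ 0 := by
      have e₁ : ∀ x₀ : X, (∫ y, Real.exp (g y - C (x₀, y)) ∂μ)
          = ∫ y, Real.exp (1 * u y) * Real.exp (g' y - C (x₀, y)) ∂μ := by
        intro x₀
        refine integral_congr_ae (Filter.Eventually.of_forall fun y => ?_)
        show Real.exp (g y - C (x₀, y)) = Real.exp (1 * u y) * Real.exp (g' y - C (x₀, y))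
        rw [← Real.exp_add]
        congr 1
        simp only [hu_def]
        ring
      have e₀ : ∀ x₀ : X, (∫ y, Real.exp (g' y - C (x₀, y)) ∂μ)
          = ∫ y, Real.exp (0 * u y) * Real.exp (g' y - C (x₀, y)) ∂μ := by
        intro x₀
        refine integral_congr_ae (Filter.Eventually.of_forall fun y => ?_)
        simp
      simp only [softT, hφdef, hJ₁def, hJ₂def, hk₁def, hk₂def]
      rw [e₁ x, e₁ x', e₀ x, e₀ x']
      ring
    rw [hφ10]
    have : φ 1 - φ 0 = φ' t₀ := by
      rw [hslope]; field_simp; ring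
    rw [this]
    exact hbound
  -- assemble varNorm
  rw [varNorm, show (1 - Real.exp (-(L * Metric.diam (Set.univ : Set X)))) *
      varNorm (fun x => g x - g' x) = (1 - c) * s from rfl]
  rw [sub_le_iff_le_add]
  refine ciSup_le fun x => ?_
  have h2 : (softT C μ g x - softT C μ g' x) - (1 - c) * s
      ≤ ⨅ x', (softT C μ g x' - softT C μ g' x') :=
    le_ciInf fun x' => by linarith [claim x x']
  linarith
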